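/- (Generalized Hong–Ou–Mandel suppression) Let F = (1/√2)·[[1,1],[1,−1]] be the 2×2 discrete Fourier (50:50 beam splitter) matrix and let n̄ be a positive integer. Then for every pair (n₁,n₂) of nonnegative integers with n₁ + n₂ = 2n̄ and n₁ odd, the matrix entry [B_{2n̄}(F)]_{(n₁,n₂),(n̄,n̄)} of the 2n̄-boson representation of F is zero. -/

import Mathlib

namespace BSF

variable {α : Type*} [Fintype α] [DecidableEq α]

/-- The canonical list in which each index `i` is repeated `ν i` times. -/
noncomputable def repList (ν : α → ℕ) : List α :=
  Finset.univ.toList.flatMap fun i => List.replicate (ν i) i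

set_option linter.unusedSectionVars false in
lemma repList_length (ν : α → ℕ) : (repList ν).length = ∑ i, ν i := by
  simp [repList, List.length_flatMap]

/-- The index set `T(m,n)`: occupation-number tuples with total `n`. -/
def BosonIdx (α : Type*) [Fintype α] (n : ℕ) := {ν : α → ℕ // ∑ i, ν i = n}

instance {n : ℕ} : DecidableEq (BosonIdx α n) :=
  inferInstanceAs (DecidableEq {ν : α → ℕ // ∑ i, ν i = n})

noncomputable instance {n : ℕ} : Fintype (BosonIdx α n) :=
  Fintype.ofInjective
    (fun ν : BosonIdx α n => fun i : α =>
      (⟨ν.1 i, by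
        have h := Finset.single_le_sum (f := ν.1) (fun j _ => Nat.zero_le _) (Finset.mem_univ i)
        rw [ν.2] at h
        omega⟩ : Fin (n + 1)))
    (fun a b hab => Subtype.ext (funext fun i => congrArg Fin.val (congrFun hab i)))

/-- The permanent of a square complex matrix. -/
noncomputable def permanent {n : ℕ} (M : Matrix (Fin n) (Fin n) ℂ) : ℂ :=
  ∑ σ : Equiv.Perm (Fin n), ∏ i, M (σ i) i

/-- The canonical repetition function associated with an occupation tuple. -/
noncomputable def repFun {n : ℕ} (ν : BosonIdx α n) : Fin n → α :=
  fun k => (repList ν.1).get (Fin.cast ((repList_length ν.1).trans ν.2).symm k)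

/-- The `n`-boson representation of a matrix `S`. -/
noncomputable def bosonRep (n : ℕ) (S : Matrix α α ℂ) :
    Matrix (BosonIdx α n) (BosonIdx α n) ℂ :=
  Matrix.of fun ν ν' =>
    permanent (Matrix.of fun k l => S (repFun ν k) (repFun ν' l)) /
      (Real.sqrt ((∏ i, (ν.1 i).factorial * (ν'.1 i).factorial : ℕ) : ℝ) : ℂ)

/-- Relabeling an occupation tuple by (precomposition with) a permutation of the modes. -/
def permIdx {n : ℕ} (σ : Equiv.Perm α) (ν : BosonIdx α n) : BosonIdx α n :=
  ⟨ν.1 ∘ σ, show ∑ i, ν.1 (σ i) = n from (Equiv.sum_comp σ ν.1).trans ν.2⟩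


/- ======================= auxiliary lemmas ======================= -/

lemma permanent_eq_zero {N : ℕ} (M : Matrix (Fin N) (Fin N) ℂ) (e : Equiv.Perm (Fin N))
    (s : Fin N → ℂ) (hs : ∏ k, s k = -1) (key : ∀ k l, M k (e l) = s k * M k l) :
    permanent M = 0 := by
  have h1 : ∑ σ : Equiv.Perm (Fin N), ∏ l, M (σ l) (e l) = permanent M := by
    rw [permanent]
    apply Fintype.sum_bijective (· * e⁻¹) (Group.mulRight_bijective e⁻¹)
    intro σ
    have := Equiv.prod_comp e fun m => M (σ (e⁻¹ m)) m
    simpa using this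
  have h2 : ∑ σ : Equiv.Perm (Fin N), ∏ l, M (σ l) (e l) = -permanent M := by
    rw [permanent, ← Finset.sum_neg_distrib]
    refine Finset.sum_congr rfl fun σ _ => ?_
    calc ∏ l, M (σ l) (e l) = ∏ l, s (σ l) * M (σ l) l := by
          refine Finset.prod_congr rfl fun l _ => key _ _
      _ = (∏ l, s (σ l)) * ∏ l, M (σ l) l := Finset.prod_mul_distrib
      _ = -∏ l, M (σ l) l := by rw [Equiv.prod_comp σ s, hs, neg_one_mul]
  have h3 := h1.symm.trans h2
  have h4 : (2 : ℂ) * permanent M = 0 := by linear_combination h3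
  rcases mul_eq_zero.mp h4 with h | h
  · exact absurd h two_ne_zero
  · exact h

lemma prod_if_lt (n N : ℕ) (u v : ℂ) :
    ∏ k : Fin N, (if (k : ℕ) < n then u else v) = u ^ min n N * v ^ (N - n) := by
  rw [Fin.prod_univ_eq_prod_range (fun k => if k < n then u else v) N]
  induction N with
  | zero => simp
  | succ m ih =>
    rw [Finset.prod_range_succ, ih]
    rcases Nat.lt_or_ge m n with hm | hm
    · rw [if_pos hm]
      have h1 : min n (m+1) = min n m + 1 := by omega
      have h2 : m + 1 - n = m - n := by omega
      rw [h1, h2, pow_succ]; ring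
    · rw [if_neg (by omega)]
      have h1 : min n (m+1) = min n m := by omega
      have h2 : m + 1 - n = (m - n) + 1 := by omega
      rw [h1, h2, pow_succ]; ring

lemma univ_toList_fin2 :
    (Finset.univ.toList : List (Fin 2)) = [0, 1] ∨ (Finset.univ.toList : List (Fin 2)) = [1, 0] := by
  have hlen : (Finset.univ.toList : List (Fin 2)).length = 2 := by
    simp [Finset.length_toList]
  have hnd := Finset.nodup_toList (Finset.univ : Finset (Fin 2))
  rcases hl : (Finset.univ.toList : List (Fin 2)) with _ | ⟨a, _ | ⟨b, _ | ⟨c, t⟩⟩⟩ <;>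
    rw [hl] at hlen hnd <;> simp_all
  have hab : a ≠ b := hnd
  clear hl hnd
  revert hab; revert a b; decide

lemma getElem_rep2 (a b : ℕ) (x y : Fin 2) (i : ℕ)
    (hi : i < (List.replicate a x ++ (List.replicate b y ++ ([] : List (Fin 2)))).length) :
    (List.replicate a x ++ (List.replicate b y ++ ([] : List (Fin 2))))[i] =
      if i < a then x else y := by
  simp only [List.append_nil] at hi ⊢
  rcases Nat.lt_or_ge i a with h | h
  · rw [List.getElem_append_left (by simpa using h), List.getElem_replicate, if_pos h]
  · rw [List.getElem_append_right (by simpa using h), List.getElem_replicate, if_neg (by omega)]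

lemma repFun_of (x y : Fin 2) (hL : (Finset.univ.toList : List (Fin 2)) = [x, y])
    {n : ℕ} (ν : BosonIdx (Fin 2) n) (k : Fin n) :
    repFun ν k = if (k : ℕ) < ν.1 x then x else y := by
  have hrep : repList ν.1 = List.replicate (ν.1 x) x ++ (List.replicate (ν.1 y) y ++ []) := by
    rw [repList, hL]; rfl
  unfold repFun
  rw [List.get_of_eq hrep, List.get_eq_getElem]
  exact getElem_rep2 _ _ _ _ _ _

/- ======================= end auxiliary lemmas ======================= -/

/-- Generalized Hong–Ou–Mandel suppression. For the 50:50 beam splitter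
`F = (1/√2)·[[1,1],[1,−1]]` and input `(n̄, n̄)`, all outputs `(n₁, n₂)` with `n₁` odd are
suppressed: the corresponding entry of the `2n̄`-boson representation of `F` vanishes. -/
theorem hom_suppression (nb : ℕ) (hnb : 0 < nb) (n₁ n₂ : ℕ)
    (h : n₁ + n₂ = 2 * nb) (hodd : Odd n₁) :
    bosonRep (2 * nb)
      (((Real.sqrt 2 : ℝ) : ℂ)⁻¹ • (!![1, 1; 1, -1] : Matrix (Fin 2) (Fin 2) ℂ))
      ⟨![n₁, n₂], by simpa [Fin.sum_univ_two] using h⟩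
      ⟨![nb, nb], by simp [Fin.sum_univ_two]; omega⟩ = 0 := by
  classical
  haveI : NeZero (2 * nb) := ⟨by omega⟩
  set ν : BosonIdx (Fin 2) (2 * nb) := ⟨![n₁, n₂], by simpa [Fin.sum_univ_two] using h⟩
  set ν' : BosonIdx (Fin 2) (2 * nb) := ⟨![nb, nb], by simp [Fin.sum_univ_two]; omega⟩
  set S : Matrix (Fin 2) (Fin 2) ℂ :=
    ((Real.sqrt 2 : ℝ) : ℂ)⁻¹ • (!![1, 1; 1, -1] : Matrix (Fin 2) (Fin 2) ℂ) with hS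
  rw [bosonRep, Matrix.of_apply]
  suffices hp : permanent (Matrix.of fun k l => S (repFun ν k) (repFun ν' l)) = 0 by
    rw [hp, zero_div]
  -- the "swap the two halves of the columns" permutation
  set e : Equiv.Perm (Fin (2 * nb)) := Equiv.addLeft (⟨nb, by omega⟩ : Fin (2 * nb)) with he_def
  have hval : ∀ l : Fin (2 * nb),
      ((e l : Fin (2 * nb)) : ℕ) = if (l : ℕ) < nb then (l : ℕ) + nb else (l : ℕ) - nb := by
    intro l
    have hl := l.isLt
    show (((⟨nb, by omega⟩ : Fin (2 * nb)) + l : Fin (2 * nb)) : ℕ) = _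
    rw [Fin.add_def]
    simp only
    split
    · next hc =>
      rw [Nat.mod_eq_of_lt (by omega : nb + (l : ℕ) < 2 * nb)]
      omega
    · next hc =>
      rw [Nat.mod_eq_sub_mod (by omega : 2 * nb ≤ nb + (l : ℕ)),
        Nat.mod_eq_of_lt (by omega : nb + (l : ℕ) - 2 * nb < 2 * nb)]
      omega
  have hn₂ : n₂ = 2 * nb - n₁ := by omega
  have hn₁le : n₁ ≤ 2 * nb := by omega
  have hoddn₂ : Odd n₂ := by
    rcases hodd with ⟨t, ht⟩
    refine ⟨nb - t - 1, ?_⟩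
    omega
  rcases univ_toList_fin2 with hL | hL
  · -- univ.toList = [0, 1]
    have hrν : ∀ k, repFun ν k = if (k : ℕ) < n₁ then (0 : Fin 2) else 1 := by
      intro k; exact repFun_of 0 1 hL ν k
    have hrν' : ∀ l, repFun ν' l = if (l : ℕ) < nb then (0 : Fin 2) else 1 := by
      intro l; exact repFun_of 0 1 hL ν' l
    apply permanent_eq_zero _ e (fun k => if (k : ℕ) < n₁ then (1 : ℂ) else -1)
    · rw [prod_if_lt, one_pow, one_mul, ← hn₂]
      exact hoddn₂.neg_one_pow
    · intro k l
      simp only [Matrix.of_apply]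
      rw [hrν k, hrν' (e l), hrν' l, hval l]
      rcases Nat.lt_or_ge (k : ℕ) n₁ with hk | hk <;>
        rcases Nat.lt_or_ge (l : ℕ) nb with hl | hl
      · simp only [if_pos hk, if_pos hl, if_neg (show ¬ (l:ℕ) + nb < nb by omega)]
        norm_num [hS, Matrix.smul_apply]
      · simp only [if_pos hk, if_neg (show ¬ (l:ℕ) < nb by omega),
          if_pos (show (l:ℕ) - nb < nb by have := l.isLt; omega)]
        norm_num [hS, Matrix.smul_apply]
      · simp only [if_neg (show ¬ (k:ℕ) < n₁ by omega), if_pos hl,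
          if_neg (show ¬ (l:ℕ) + nb < nb by omega)]
        norm_num [hS, Matrix.smul_apply]
      · simp only [if_neg (show ¬ (k:ℕ) < n₁ by omega),
          if_neg (show ¬ (l:ℕ) < nb by omega),
          if_pos (show (l:ℕ) - nb < nb by have := l.isLt; omega)]
        norm_num [hS, Matrix.smul_apply]
  · -- univ.toList = [1, 0]
    have hrν : ∀ k, repFun ν k = if (k : ℕ) < n₂ then (1 : Fin 2) else 0 := by
      intro k; simpa [ν] using repFun_of 1 0 hL ν k
    have hrν' : ∀ l, repFun ν' l = if (l : ℕ) < nb then (1 : Fin 2) else 0 := by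
      intro l; simpa [ν'] using repFun_of 1 0 hL ν' l
    apply permanent_eq_zero _ e (fun k => if (k : ℕ) < n₂ then (-1 : ℂ) else 1)
    · rw [prod_if_lt, one_pow, mul_one, min_eq_left (by omega)]
      exact hoddn₂.neg_one_pow
    · intro k l
      simp only [Matrix.of_apply]
      rw [hrν k, hrν' (e l), hrν' l, hval l]
      rcases Nat.lt_or_ge (k : ℕ) n₂ with hk | hk <;>
        rcases Nat.lt_or_ge (l : ℕ) nb with hl | hl
      · simp only [if_pos hk, if_pos hl, if_neg (show ¬ (l:ℕ) + nb < nb by omega)]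
        norm_num [hS, Matrix.smul_apply]
      · simp only [if_pos hk, if_neg (show ¬ (l:ℕ) < nb by omega),
          if_pos (show (l:ℕ) - nb < nb by have := l.isLt; omega)]
        norm_num [hS, Matrix.smul_apply]
      · simp only [if_neg (show ¬ (k:ℕ) < n₂ by omega), if_pos hl,
          if_neg (show ¬ (l:ℕ) + nb < nb by omega)]
        norm_num [hS, Matrix.smul_apply]
      · simp only [if_neg (show ¬ (k:ℕ) < n₂ by omega),
          if_neg (show ¬ (l:ℕ) < nb by omega),
          if_pos (show (l:ℕ) - nb < nb by have := l.isLt; omega)]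
        norm_num [hS, Matrix.smul_apply]


end BSF
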